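/- Let p be a prime and 𝔉 an ℕ_p-saturated formation of finite groups containing every finite p-group. Let N be an elementary abelian normal p-subgroup of a finite group G such that G/N ∈ 𝔉 and the semidirect product N ⋊ (G/C_G(N)) belongs to 𝔉, where C_G(N) is the centralizer of N in G and G/C_G(N) acts on N by the action induced by conjugation. Then G ∈ 𝔉. -/

import Mathlib

set_option maxHeartbeats 1000000
set_option linter.unusedVariables false
set_option linter.unusedSectionVars false

/-- A bundled finite group. -/
structure FinGrp : Type 1 where
  carrier : Type
  [grp : Group carrier]
  [fin : Finite carrier]

attribute [instance] FinGrp.grp FinGrp.fin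

/-- A class of finite groups. -/
abbrev GroupClass : Type 1 := ∀ (G : Type) [Group G] [Finite G], Prop

/-- The empty class of groups. -/
def EmptyClass : GroupClass := fun _ _ _ => False

/-- A formation: a class of finite groups closed under isomorphism, homomorphic images and
subdirect products. -/
structure IsFormation (F : GroupClass) : Prop where
  iso_closed : ∀ (G : Type) [Group G] [Finite G] (H : Type) [Group H] [Finite H],
    Nonempty (G ≃* H) → F G → F H
  quotient_closed : ∀ (G : Type) [Group G] [Finite G] (N : Subgroup G) [N.Normal],
    F G → F (G ⧸ N)
  subdirect_closed : ∀ (G : Type) [Group G] [Finite G] (N₁ N₂ : Subgroup G)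
    [N₁.Normal] [N₂.Normal], N₁ ⊓ N₂ = ⊥ → F (G ⧸ N₁) → F (G ⧸ N₂) → F G

/-- `H/K` is a chief factor of `G` : both are normal in `G`, `K < H`, and no normal subgroup
of `G` lies strictly between them. -/
structure IsChiefFactor (G : Type) [Group G] (H K : Subgroup G) : Prop where
  normalH : H.Normal
  normalK : K.Normal
  lt : K < H
  no_middle : ∀ N : Subgroup G, N.Normal → K ≤ N → N ≤ H → N = K ∨ N = H

/-- The centralizer `C_G(H/K) = {g ∈ G | ∀ h ∈ H, g h g⁻¹ h⁻¹ ∈ K}` of a factor `H/K`. -/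
def relCentralizer {G : Type} [Group G] (H K : Subgroup G) (hK : K.Normal) : Subgroup G where
  carrier := {g : G | ∀ h ∈ H, g * h * g⁻¹ * h⁻¹ ∈ K}
  one_mem' := by intro h hh; simpa using K.one_mem
  mul_mem' := by
    intro a b ha hb h hh
    have key : a * b * h * (a * b)⁻¹ * h⁻¹ =
        (a * (b * h * b⁻¹ * h⁻¹) * a⁻¹) * (a * h * a⁻¹ * h⁻¹) := by group
    rw [key]
    exact K.mul_mem (hK.conj_mem _ (hb h hh) a) (ha h hh)
  inv_mem' := by
    intro a ha h hh
    have h1 : (a * h * a⁻¹ * h⁻¹)⁻¹ ∈ K := K.inv_mem (ha h hh)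
    have key : a⁻¹ * h * a⁻¹⁻¹ * h⁻¹ = a⁻¹ * (a * h * a⁻¹ * h⁻¹)⁻¹ * a⁻¹⁻¹ := by group
    exact key ▸ hK.conj_mem _ h1 a⁻¹

theorem mem_relCentralizer_iff {G : Type} [Group G] {H K : Subgroup G} (hK : K.Normal)
    (g : G) : g ∈ relCentralizer H K hK ↔ ∀ h ∈ H, g * h * g⁻¹ * h⁻¹ ∈ K := Iff.rfl

theorem relCentralizer_normal {G : Type} [Group G] {H K : Subgroup G}
    (hH : H.Normal) (hK : K.Normal) : (relCentralizer H K hK).Normal := by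
  constructor
  intro c hc g h hh
  have hh' : g⁻¹ * h * g ∈ H := by simpa using hH.conj_mem h hh g⁻¹
  have hk := hc _ hh'
  have key : g * c * g⁻¹ * h * (g * c * g⁻¹)⁻¹ * h⁻¹ =
      g * (c * (g⁻¹ * h * g) * c⁻¹ * (g⁻¹ * h * g)⁻¹) * g⁻¹ := by group
  exact key ▸ hK.conj_mem _ hk g

theorem normal_sInf {G : Type} [Group G] {S : Set (Subgroup G)}
    (h : ∀ N ∈ S, N.Normal) : (sInf S).Normal := by
  constructor
  intro n hn g
  rw [Subgroup.mem_sInf] at hn ⊢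
  intro N hN
  exact (h N hN).conj_mem n (hn N hN) g

theorem normal_sSup {G : Type} [Group G] {S : Set (Subgroup G)}
    (h : ∀ N ∈ S, N.Normal) : (sSup S).Normal := by
  constructor
  intro n hn g
  rw [sSup_eq_iSup'] at hn ⊢
  refine Subgroup.iSup_induction (fun N : S => (N : Subgroup G))
    (C := fun x => g * x * g⁻¹ ∈ ⨆ N : S, (N : Subgroup G)) hn
    (fun N x hx => ?_) ?_ (fun x y hx hy => ?_)
  · exact le_iSup (fun N : S => (N : Subgroup G)) N ((h N N.2).conj_mem x hx g)
  · simpa using Subgroup.one_mem _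
  · show g * (x * y) * g⁻¹ ∈ _
    have key : g * (x * y) * g⁻¹ = g * x * g⁻¹ * (g * y * g⁻¹) := by group
    rw [key]
    exact Subgroup.mul_mem _ hx hy
/-- `O_p(G)`: the largest normal `p`-subgroup of `G` (the join of all normal `p`-subgroups). -/
def pRadical (p : ℕ) (G : Type) [Group G] : Subgroup G :=
  sSup {N : Subgroup G | N.Normal ∧ IsPGroup p N}

instance pRadical_normal (p : ℕ) (G : Type) [Group G] : (pRadical p G).Normal :=
  normal_sSup fun _ hN => hN.1

/-- `O_{p'}(G)`: the largest normal subgroup of `G` of order coprime to `p`. -/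
def pPrimeRadical (p : ℕ) (G : Type) [Group G] : Subgroup G :=
  sSup {N : Subgroup G | N.Normal ∧ Nat.Coprime (Nat.card N) p}

instance pPrimeRadical_normal (p : ℕ) (G : Type) [Group G] : (pPrimeRadical p G).Normal :=
  normal_sSup fun _ hN => hN.1

/-- `O_{p',p}(G)`: the preimage in `G` of `O_p(G / O_{p'}(G))`. -/
def pPrimePRadical (p : ℕ) (G : Type) [Group G] : Subgroup G :=
  (pRadical p (G ⧸ pPrimeRadical p G)).comap (QuotientGroup.mk' (pPrimeRadical p G))

instance pPrimePRadical_normal (p : ℕ) (G : Type) [Group G] : (pPrimePRadical p G).Normal :=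
  (pRadical_normal p _).comap _

/-- A composition series of `G` : a chain `⊥ = c 0 ≤ ⋯ ≤ c n = ⊤` of subgroups, each normal
in the next one with simple quotient. -/
def IsCompSeries {G : Type} [Group G] (n : ℕ) (c : Fin (n + 1) → Subgroup G) : Prop :=
  c 0 = ⊥ ∧ c (Fin.last n) = ⊤ ∧
  ∀ i : Fin n, c i.castSucc ≤ c i.succ ∧
    ∃ hn : ((c i.castSucc).subgroupOf (c i.succ)).Normal,
      letI := hn
      IsSimpleGroup ((c i.succ) ⧸ (c i.castSucc).subgroupOf (c i.succ))

/-- `S` is (isomorphic to) a composition factor of the finite group `G`. -/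
def IsCompFactor (S : Type) [Group S] (G : Type) [Group G] : Prop :=
  ∃ (n : ℕ) (c : Fin (n + 1) → Subgroup G), IsCompSeries n c ∧
    ∃ i : Fin n, ∃ hn : ((c i.castSucc).subgroupOf (c i.succ)).Normal,
      letI := hn
      Nonempty (((c i.succ) ⧸ (c i.castSucc).subgroupOf (c i.succ)) ≃* S)

/-- The small centralizer `c_G(H/K)` of a factor `H/K` : the subgroup generated by all normal
subgroups `N` of `G` such that no composition factor of `NK/K` is isomorphic to a composition
factor of `H/K`. -/
def smallCentralizer {G : Type} [Group G] (H K : Subgroup G) (hK : K.Normal) : Subgroup G :=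
  haveI := hK
  sSup {N : Subgroup G | N.Normal ∧ ∀ (S : Type) (_ : Group S),
    IsCompFactor S (↥(N ⊔ K) ⧸ K.subgroupOf (N ⊔ K)) → ¬ IsCompFactor S (H ⧸ K.subgroupOf H)}

theorem smallCentralizer_normal {G : Type} [Group G] {H K : Subgroup G} (hK : K.Normal) :
    (smallCentralizer H K hK).Normal :=
  normal_sSup fun _ hN => hN.1

/-- `C^S(G)`: the intersection of the centralizers of all chief factors of `G` all of whose
composition factors are isomorphic to `S`. -/
def CSRad (S : Type) [Group S] (G : Type) [Group G] : Subgroup G :=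
  sInf {C : Subgroup G | ∃ (H K : Subgroup G) (hcf : IsChiefFactor G H K),
    (haveI := hcf.normalK;
      ∀ (T : Type) (_ : Group T), IsCompFactor T (H ⧸ K.subgroupOf H) → Nonempty (T ≃* S)) ∧
    C = relCentralizer H K hcf.normalK}

instance CSRad_normal (S : Type) [Group S] (G : Type) [Group G] : (CSRad S G).Normal :=
  normal_sInf fun C hC => by
    obtain ⟨H, K, hcf, -, rfl⟩ := hC
    exact relCentralizer_normal hcf.normalH hcf.normalK

/-- `C^p(G)`: the intersection of the centralizers of all chief factors of `G` whose order is
a power of the prime `p`. -/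
def CpRad (p : ℕ) (G : Type) [Group G] : Subgroup G :=
  sInf {C : Subgroup G | ∃ (H K : Subgroup G) (hcf : IsChiefFactor G H K),
    (∃ n : ℕ, Nat.card (H ⧸ K.subgroupOf H) = p ^ n) ∧ C = relCentralizer H K hcf.normalK}

instance CpRad_normal (p : ℕ) (G : Type) [Group G] : (CpRad p G).Normal :=
  normal_sInf fun C hC => by
    obtain ⟨H, K, hcf, -, rfl⟩ := hC
    exact relCentralizer_normal hcf.normalH hcf.normalK

/-- The centralizer of a normal subgroup is normal. -/
instance centralizer_normal_of_normal {G : Type} [Group G] (N : Subgroup G) [hN : N.Normal] :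
    (Subgroup.centralizer (N : Set G)).Normal := by
  constructor
  intro c hc g
  rw [Subgroup.mem_centralizer_iff] at hc ⊢
  intro h hh
  have hh' : g⁻¹ * h * g ∈ N := by simpa using hN.conj_mem h hh g⁻¹
  have hcomm := hc _ hh'
  have e1 : h * (g * c * g⁻¹) = g * (g⁻¹ * h * g * c) * g⁻¹ := by group
  rw [e1, hcomm]
  group

/-- The intersection of two normal subgroups is normal. -/
instance inf_normal {G : Type} [Group G] (A B : Subgroup G) [hA : A.Normal] [hB : B.Normal] :
    (A ⊓ B).Normal :=
  ⟨fun n hn g => ⟨hA.conj_mem n hn.1 g, hB.conj_mem n hn.2 g⟩⟩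

instance finite_semidirectProduct {N G : Type} [Group N] [Group G] (φ : G →* MulAut N)
    [Finite N] [Finite G] : Finite (N ⋊[φ] G) :=
  Finite.of_injective (fun x => (x.left, x.right)) (by
    intro a b hab
    simp only [Prod.mk.injEq] at hab
    exact SemidirectProduct.ext hab.1 hab.2)
/-! ### Satellites -/

/-- A local satellite: a map assigning to each prime a class of finite groups which is either
empty or a formation. -/
def IsLocalSatellite (f : ℕ → GroupClass) : Prop :=
  ∀ p : ℕ, p.Prime → (f p = EmptyClass ∨ IsFormation (f p))

/-- A chief factor `H/K` of `G` is `f`-central for a local satellite `f` if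
`G / C_G(H/K) ∈ f q` for every prime `q` dividing `|H/K|`. -/
def LocFCentral (f : ℕ → GroupClass) {G : Type} [Group G] [Finite G]
    (H K : Subgroup G) (hcf : IsChiefFactor G H K) : Prop :=
  ∀ q : ℕ, q.Prime → q ∣ Nat.card (H ⧸ K.subgroupOf H) →
    haveI := relCentralizer_normal hcf.normalH hcf.normalK
    f q (G ⧸ relCentralizer H K hcf.normalK)

/-- `LF f`: the class of all finite groups all of whose chief factors are `f`-central. -/
def LF (f : ℕ → GroupClass) (G : Type) [Group G] [Finite G] : Prop :=
  ∀ (H K : Subgroup G) (hcf : IsChiefFactor G H K), LocFCentral f H K hcf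

/-- An `ω`-local satellite: values `f p` for `p ∈ ω` and a value `f'` (= `f(ω')`),
all empty or formations. -/
def IsOmegaLocalSatellite (ω : Set ℕ) (f : ℕ → GroupClass) (f' : GroupClass) : Prop :=
  (∀ p ∈ ω, f p = EmptyClass ∨ IsFormation (f p)) ∧ (f' = EmptyClass ∨ IsFormation f')

/-- A chief factor `H/K` is `f`-central for the `ω`-local satellite `(f, f')`. -/
def OmegaFCentral (ω : Set ℕ) (f : ℕ → GroupClass) (f' : GroupClass) {G : Type} [Group G]
    [Finite G] (H K : Subgroup G) (hcf : IsChiefFactor G H K) : Prop :=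
  ((∃ p ∈ ω, p ∣ Nat.card (H ⧸ K.subgroupOf H)) ∧
    ∀ p ∈ ω, p ∣ Nat.card (H ⧸ K.subgroupOf H) →
      haveI := relCentralizer_normal hcf.normalH hcf.normalK
      f p (G ⧸ relCentralizer H K hcf.normalK)) ∨
  ((∀ p ∈ ω, ¬ p ∣ Nat.card (H ⧸ K.subgroupOf H)) ∧
    haveI := smallCentralizer_normal (H := H) hcf.normalK;
    f' (G ⧸ smallCentralizer H K hcf.normalK))

/-- `LF_ω(f)`: the class of all finite groups all of whose chief factors are `f`-central. -/
def LFomega (ω : Set ℕ) (f : ℕ → GroupClass) (f' : GroupClass) (G : Type) [Group G]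
    [Finite G] : Prop :=
  ∀ (H K : Subgroup G) (hcf : IsChiefFactor G H K), OmegaFCentral ω f f' H K hcf

/-- A function assigning a class of finite groups to every finite group
(used on simple groups). -/
abbrev CompSatFun : Type 1 := ∀ (S : Type) [Group S] [Finite S], GroupClass

/-- A composition satellite: assigns to each finite simple group (invariantly under isomorphism)
a class which is either empty or a formation. -/
def IsCompSatellite (f : CompSatFun) : Prop :=
  (∀ (S : Type) [Group S] [Finite S] (T : Type) [Group T] [Finite T],
      IsSimpleGroup S → IsSimpleGroup T → Nonempty (S ≃* T) → f S = f T) ∧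
  (∀ (S : Type) [Group S] [Finite S], IsSimpleGroup S → (f S = EmptyClass ∨ IsFormation (f S)))

/-- A chief factor `H/K` of `G` is `f`-central for a composition satellite `f` if
`G / C_G(H/K) ∈ f S` where `S` is the composition type of `H/K`. -/
def CompFCentral (f : CompSatFun) {G : Type} [Group G] [Finite G]
    (H K : Subgroup G) (hcf : IsChiefFactor G H K) : Prop :=
  ∀ (S : Type) (_ : Group S) (_ : Finite S),
    (haveI := hcf.normalK; IsCompFactor S (H ⧸ K.subgroupOf H)) →
    haveI := relCentralizer_normal hcf.normalH hcf.normalK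
    f S (G ⧸ relCentralizer H K hcf.normalK)

/-- `CF f`: the class of all finite groups all of whose chief factors are `f`-central. -/
def CF (f : CompSatFun) (G : Type) [Group G] [Finite G] : Prop :=
  ∀ (H K : Subgroup G) (hcf : IsChiefFactor G H K), CompFCentral f H K hcf

/-- An (isomorphism-closed) class of finite simple groups. -/
def IsSimpleClass (L : GroupClass) : Prop :=
  (∀ (S : Type) [Group S] [Finite S], L S → IsSimpleGroup S) ∧
  (∀ (S : Type) [Group S] [Finite S] (T : Type) [Group T] [Finite T],
    Nonempty (S ≃* T) → L S → L T)

/-- An `𝔏`-composition satellite: values `f S` for simple `S ∈ 𝔏` (invariant under isomorphism)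
and a single value `f'` (= `f(𝔏')`), all empty or formations. -/
def IsLCompSatellite (L : GroupClass) (f : CompSatFun) (f' : GroupClass) : Prop :=
  (∀ (S : Type) [Group S] [Finite S] (T : Type) [Group T] [Finite T],
      L S → L T → Nonempty (S ≃* T) → f S = f T) ∧
  (∀ (S : Type) [Group S] [Finite S], L S → (f S = EmptyClass ∨ IsFormation (f S))) ∧
  (f' = EmptyClass ∨ IsFormation f')

/-- A chief factor `H/K` is `f`-central for the `𝔏`-composition satellite `(f, f')` :
either its composition type `S` lies in `𝔏` and `G/C_G(H/K) ∈ f S`, or its composition type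
lies in `𝔏'` and `G/c_G(H/K) ∈ f'`. -/
def LCompFCentral (L : GroupClass) (f : CompSatFun) (f' : GroupClass) {G : Type} [Group G]
    [Finite G] (H K : Subgroup G) (hcf : IsChiefFactor G H K) : Prop :=
  ((∃ (S : Type) (_ : Group S) (_ : Finite S),
      (haveI := hcf.normalK; IsCompFactor S (H ⧸ K.subgroupOf H)) ∧ L S ∧
      (haveI := relCentralizer_normal hcf.normalH hcf.normalK;
        f S (G ⧸ relCentralizer H K hcf.normalK)))) ∨
  ((∃ (S : Type) (_ : Group S) (_ : Finite S),
      (haveI := hcf.normalK; IsCompFactor S (H ⧸ K.subgroupOf H)) ∧ IsSimpleGroup S ∧ ¬ L S) ∧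
    haveI := smallCentralizer_normal (H := H) hcf.normalK;
    f' (G ⧸ smallCentralizer H K hcf.normalK))

/-- `CF_𝔏(f)`: the class of all finite groups all of whose chief factors are `f`-central. -/
def CFL (L : GroupClass) (f : CompSatFun) (f' : GroupClass) (G : Type) [Group G]
    [Finite G] : Prop :=
  ∀ (H K : Subgroup G) (hcf : IsChiefFactor G H K), LCompFCentral L f f' H K hcf

/-! ### Radicals and saturation -/

/-- The largest normal subgroup all of whose composition factors lie in `𝔏`. -/
def ELRadical (L : GroupClass) (G : Type) [Group G] [Finite G] : Subgroup G :=
  sSup {N : Subgroup G | N.Normal ∧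
    ∀ (S : Type) (_ : Group S) (_ : Finite S), IsCompFactor S N → L S}

instance ELRadical_normal (L : GroupClass) (G : Type) [Group G] [Finite G] :
    (ELRadical L G).Normal :=
  normal_sSup fun _ hN => hN.1

/-- `G_{ωd}`: the largest normal subgroup of `G` all of whose `G`-chief factors below it have
order divisible by some prime in `ω`. -/
def omegadRadical (ω : Set ℕ) (G : Type) [Group G] [Finite G] : Subgroup G :=
  sSup {N : Subgroup G | N.Normal ∧ ∀ (H K : Subgroup G), IsChiefFactor G H K → H ≤ N →
    ∃ p ∈ ω, p ∣ Nat.card (H ⧸ K.subgroupOf H)}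

instance omegadRadical_normal (ω : Set ℕ) (G : Type) [Group G] [Finite G] :
    (omegadRadical ω G).Normal :=
  normal_sSup fun _ hN => hN.1

/-- The soluble radical: the largest normal soluble subgroup. -/
def solRadical (G : Type) [Group G] : Subgroup G :=
  sSup {N : Subgroup G | N.Normal ∧ IsSolvable N}

instance solRadical_normal (G : Type) [Group G] : (solRadical G).Normal :=
  normal_sSup fun _ hN => hN.1

/-- A finite group is `ω`-soluble if each of its composition factors either has order divisible
by no prime in `ω`, or is cyclic of order `p` for some `p ∈ ω`. -/
def IsOmegaSoluble (ω : Set ℕ) (X : Type) [Group X] : Prop :=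
  ∀ (S : Type) (_ : Group S) (_ : Finite S), IsCompFactor S X →
    (∀ p ∈ ω, ¬ p ∣ Nat.card S) ∨ (∃ p ∈ ω, Nat.card S = p ∧ IsCyclic S)

/-- The `ω`-soluble radical: the largest normal `ω`-soluble subgroup. -/
def omegaSolRadical (ω : Set ℕ) (G : Type) [Group G] : Subgroup G :=
  sSup {N : Subgroup G | N.Normal ∧ IsOmegaSoluble ω N}

instance omegaSolRadical_normal (ω : Set ℕ) (G : Type) [Group G] :
    (omegaSolRadical ω G).Normal :=
  normal_sSup fun _ hN => hN.1

/-- `𝔉` is `ℕ_p`-saturated : whenever `N` is a normal `p`-subgroup of `G` with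
`G/Φ(N) ∈ 𝔉`, then `G ∈ 𝔉`. -/
def NpSaturated (p : ℕ) (F : GroupClass) : Prop :=
  ∀ (G : Type) [Group G] [Finite G] (N : Subgroup G) [N.Normal], IsPGroup p N →
    ∀ (M : Subgroup G) [M.Normal], M = (frattini N).map N.subtype → F (G ⧸ M) → F G

/-- A minimal normal subgroup. -/
def IsMinimalNormal {G : Type} [Group G] (N : Subgroup G) : Prop :=
  N.Normal ∧ N ≠ ⊥ ∧ ∀ M : Subgroup G, M.Normal → M < N → M = ⊥

/-- The socle: the subgroup generated by all minimal normal subgroups. -/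
def socle (G : Type) [Group G] : Subgroup G :=
  sSup {N : Subgroup G | IsMinimalNormal N}

/-- A finite group is supersoluble if it has a chain of normal subgroups with cyclic
successive quotients. -/
def IsSupersoluble (X : Type) [Group X] : Prop :=
  ∃ (m : ℕ) (c : Fin (m + 1) → Subgroup X), c 0 = ⊥ ∧ c (Fin.last m) = ⊤ ∧
    (∀ i : Fin m, c i.castSucc ≤ c i.succ) ∧ (∀ i : Fin (m + 1), (c i).Normal) ∧
    ∀ i : Fin m, ∃ hn : ((c i.castSucc).subgroupOf (c i.succ)).Normal,
      letI := hn
      IsCyclic ((c i.succ) ⧸ (c i.castSucc).subgroupOf (c i.succ))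

/-- `Q(𝒳)` for `𝒳 = {G/C^p(G) | G ∈ F}`: the class of all (finite) groups isomorphic to a
quotient of some `G/C^p(G)` with `G ∈ F`. -/
def QModCp (p : ℕ) (F : GroupClass) (X : Type) [Group X] [Finite X] : Prop :=
  ∃ Gb : FinGrp, F Gb.carrier ∧
    ∃ (N : Subgroup (Gb.carrier ⧸ CpRad p Gb.carrier)) (_ : N.Normal),
      Nonempty (((Gb.carrier ⧸ CpRad p Gb.carrier) ⧸ N) ≃* X)

/-- The abelian members of a class of (simple) groups. -/
def abelianIn (L : GroupClass) (S : Type) [Group S] [Finite S] : Prop :=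
  L S ∧ ∀ a b : S, a * b = b * a


/-! ### Auxiliary machinery (added for the proof) -/

section AuxFormation

variable {F : GroupClass}

theorem aux_mem_of_iso (hF : IsFormation F) {X Y : Type} [Group X] [Finite X] [Group Y]
    [Finite Y] (e : X ≃* Y) (hX : F X) : F Y :=
  hF.iso_closed X Y ⟨e⟩ hX

theorem aux_mem_of_surjective (hF : IsFormation F) {X Y : Type} [Group X] [Finite X] [Group Y]
    [Finite Y] (f : X →* Y) (hf : Function.Surjective f) (hX : F X) : F Y :=
  aux_mem_of_iso hF (QuotientGroup.quotientKerEquivOfSurjective f hf)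
    (hF.quotient_closed X f.ker hX)

theorem aux_quot_mem (hF : IsFormation F) {X Y : Type} [Group X] [Finite X] [Group Y] [Finite Y]
    (f : X →* Y) (hf : Function.Surjective f) (hY : F Y) (M : Subgroup X) [M.Normal]
    (hker : f.ker ≤ M) : F (X ⧸ M) := by
  have h1 : F (X ⧸ f.ker) :=
    aux_mem_of_iso hF (QuotientGroup.quotientKerEquivOfSurjective f hf).symm hY
  refine aux_mem_of_surjective hF
    (QuotientGroup.map f.ker M (MonoidHom.id X) (fun x hx => hker hx)) ?_ h1
  intro y
  obtain ⟨x, rfl⟩ := QuotientGroup.mk_surjective y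
  exact ⟨QuotientGroup.mk x, rfl⟩

theorem aux_subdirect (hF : IsFormation F) {X Y Z : Type} [Group X] [Finite X] [Group Y]
    [Finite Y] [Group Z] [Finite Z] (f : X →* Y) (g : X →* Z)
    (hf : Function.Surjective f) (hg : Function.Surjective g)
    (htriv : ∀ x, f x = 1 → g x = 1 → x = 1) (hY : F Y) (hZ : F Z) : F X := by
  have hinf : f.ker ⊓ g.ker = ⊥ := by
    rw [eq_bot_iff]
    intro x hx
    rw [Subgroup.mem_inf] at hx
    rw [Subgroup.mem_bot]
    exact htriv x hx.1 hx.2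
  exact hF.subdirect_closed X f.ker g.ker hinf
    (aux_mem_of_iso hF (QuotientGroup.quotientKerEquivOfSurjective f hf).symm hY)
    (aux_mem_of_iso hF (QuotientGroup.quotientKerEquivOfSurjective g hg).symm hZ)

theorem aux_prod_mem (hF : IsFormation F) {Y Z : Type} [Group Y] [Finite Y] [Group Z] [Finite Z]
    (hY : F Y) (hZ : F Z) : F (Y × Z) := by
  refine aux_subdirect hF (MonoidHom.fst Y Z) (MonoidHom.snd Y Z)
    (fun y => ⟨(y, 1), rfl⟩) (fun z => ⟨(1, z), rfl⟩) ?_ hY hZ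
  intro x h1 h2
  exact Prod.ext h1 h2

end AuxFormation

section AuxFrattini

theorem aux_frattini_map_equiv {H K : Type} [Group H] [Group K] (e : H ≃* K) :
    Subgroup.map e.toMonoidHom (frattini H) = frattini K :=
  (MulEquiv.mapSubgroup e).map_radical

theorem aux_mem_frattini_equiv {H K : Type} [Group H] [Group K] (e : H ≃* K) {x : H}
    (hx : x ∈ frattini H) : e x ∈ frattini K := by
  rw [← aux_frattini_map_equiv e]
  exact ⟨x, hx, rfl⟩

theorem aux_frattini_map_normal {X : Type} [Group X] (P : Subgroup X) [hPn : P.Normal] :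
    ((frattini ↥P).map P.subtype).Normal := by
  constructor
  intro m hm g
  obtain ⟨a, ha, rfl⟩ := hm
  refine ⟨MulAut.conjNormal g a, ?_, ?_⟩
  · have h1 := Subgroup.characteristic_iff_comap_eq.mp (frattini_characteristic (G := ↥P))
      (MulAut.conjNormal g : ↥P ≃* ↥P)
    have h2 : a ∈ (frattini ↥P).comap (MulAut.conjNormal g : ↥P ≃* ↥P).toMonoidHom := by
      rw [h1]; exact ha
    exact h2
  · exact MulAut.conjNormal_apply g a

end AuxFrattini

section AuxW

variable (p : ℕ) (Nt : Type)

/-- The auxiliary `p`-group `W` built from the elementary abelian group `Nt`: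
the underlying set is `Nt × Nt × ZMod p`, with a 2-cocycle twist making the first
component the commutator subgroup (and the Frattini subgroup). -/
@[ext]
structure WtA : Type where
  a : Nt
  b : Nt
  t : ZMod p

variable {p Nt}
variable [CommGroup Nt] [hpp : Fact p.Prime] [hex : Fact (∀ n : Nt, n ^ p = 1)]

instance aux_neZero_of_prime : NeZero p := ⟨hpp.out.ne_zero⟩
instance aux_fact_one_lt : Fact (1 < p) := ⟨hpp.out.one_lt⟩

theorem aux_pow_val_add (n : Nt) (s t : ZMod p) :
    n ^ (s + t).val = n ^ s.val * n ^ t.val := by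
  have h : n ^ p = 1 := hex.out n
  rw [ZMod.val_add, ← pow_eq_pow_mod _ h, pow_add]

instance : Mul (WtA p Nt) := ⟨fun x y => ⟨x.a * y.a * y.b ^ x.t.val, x.b * y.b, x.t + y.t⟩⟩
instance : One (WtA p Nt) := ⟨⟨1, 1, 0⟩⟩
instance : Inv (WtA p Nt) := ⟨fun x => ⟨x.a⁻¹ * x.b ^ x.t.val, x.b⁻¹, -x.t⟩⟩

@[simp] theorem WtA_mul_a (x y : WtA p Nt) : (x * y).a = x.a * y.a * y.b ^ x.t.val := rfl
@[simp] theorem WtA_mul_b (x y : WtA p Nt) : (x * y).b = x.b * y.b := rfl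
@[simp] theorem WtA_mul_t (x y : WtA p Nt) : (x * y).t = x.t + y.t := rfl
@[simp] theorem WtA_one_a : (1 : WtA p Nt).a = 1 := rfl
@[simp] theorem WtA_one_b : (1 : WtA p Nt).b = 1 := rfl
@[simp] theorem WtA_one_t : (1 : WtA p Nt).t = 0 := rfl
@[simp] theorem WtA_inv_a (x : WtA p Nt) : x⁻¹.a = x.a⁻¹ * x.b ^ x.t.val := rfl
@[simp] theorem WtA_inv_b (x : WtA p Nt) : x⁻¹.b = x.b⁻¹ := rfl
@[simp] theorem WtA_inv_t (x : WtA p Nt) : x⁻¹.t = -x.t := rfl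

instance : Group (WtA p Nt) where
  mul_assoc x y z := by
    ext
    · simp only [WtA_mul_a, WtA_mul_b, WtA_mul_t]
      rw [aux_pow_val_add, mul_pow]
      simp only [mul_assoc, mul_comm, mul_left_comm]
    · simp only [WtA_mul_b]; rw [mul_assoc]
    · simp only [WtA_mul_t]; rw [add_assoc]
  one_mul x := by
    ext <;> simp
  mul_one x := by
    ext <;> simp
  inv_mul_cancel x := by
    have h : x.b ^ x.t.val * x.b ^ (-x.t).val = 1 := by
      rw [← aux_pow_val_add, add_neg_cancel, ZMod.val_zero, pow_zero]
    ext
    · simp only [WtA_mul_a, WtA_inv_a, WtA_inv_b, WtA_inv_t, WtA_one_a]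
      calc x.a⁻¹ * x.b ^ x.t.val * x.a * x.b ^ (-x.t).val
          = (x.a⁻¹ * x.a) * (x.b ^ x.t.val * x.b ^ (-x.t).val) := by
            simp only [mul_assoc, mul_comm, mul_left_comm]
        _ = 1 := by rw [h, inv_mul_cancel, one_mul]
    · simp
    · simp

/-- The central embedding of `Nt` into `WtA p Nt`. -/
def ιW : Nt →* WtA p Nt where
  toFun a := ⟨a, 1, 0⟩
  map_one' := rfl
  map_mul' a b := by ext <;> simp

@[simp] theorem ιW_a (a : Nt) : (ιW a : WtA p Nt).a = a := rfl
@[simp] theorem ιW_b (a : Nt) : (ιW a : WtA p Nt).b = 1 := rfl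
@[simp] theorem ιW_t (a : Nt) : (ιW a : WtA p Nt).t = 0 := rfl

theorem ιW_injective : Function.Injective (ιW : Nt →* WtA p Nt) :=
  fun a b h => congrArg WtA.a h

theorem ιW_comm (a : Nt) (w : WtA p Nt) : ιW a * w = w * ιW a := by
  ext <;> simp [mul_comm]

/-- Projection onto the second (`b`) component. -/
def prB : WtA p Nt →* Nt where
  toFun x := x.b
  map_one' := rfl
  map_mul' x y := rfl

/-- Projection onto the `t` component. -/
def prT : WtA p Nt →* Multiplicative (ZMod p) where
  toFun x := Multiplicative.ofAdd x.t
  map_one' := rfl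
  map_mul' x y := rfl

/-- Projection onto the Frattini quotient `Nt × (ZMod p)`. -/
def prW : WtA p Nt →* Nt × Multiplicative (ZMod p) where
  toFun x := (x.b, Multiplicative.ofAdd x.t)
  map_one' := rfl
  map_mul' x y := rfl

theorem WtA_pgroup : IsPGroup p (WtA p Nt) := by
  intro x
  refine ⟨2, ?_⟩
  have hb : (x ^ p).b = 1 := by
    have h1 : (x ^ p).b = x.b ^ p := map_pow (prB (p := p) (Nt := Nt)) x p
    rw [h1, hex.out]
  have ht : (x ^ p).t = 0 := by
    have h1 : Multiplicative.ofAdd ((x ^ p).t) = (Multiplicative.ofAdd x.t) ^ p :=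
      map_pow (prT (p := p) (Nt := Nt)) x p
    have h2 : ((Multiplicative.ofAdd x.t) ^ p).toAdd = p • x.t := by
      rw [toAdd_pow]; rfl
    have h3 : (x ^ p).t = p • x.t := by
      have := congrArg Multiplicative.toAdd h1
      simpa using this.trans h2
    rw [h3, nsmul_eq_mul, ZMod.natCast_self, zero_mul]
  have hxp : x ^ p = ιW ((x ^ p).a) := by
    ext
    · rfl
    · rw [hb]; rfl
    · rw [ht]; rfl
  rw [pow_two, pow_mul, hxp, ← map_pow, hex.out, map_one]

instance [Finite Nt] : Finite (WtA p Nt) := by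
  refine Finite.of_injective (fun x : WtA p Nt => (x.a, x.b, x.t)) ?_
  intro x y h
  simp only [Prod.mk.injEq] at h
  ext
  · exact h.1
  · exact h.2.1
  · exact h.2.2

theorem ιW_mem_frattini [Finite Nt] (a : Nt) : ιW a ∈ frattini (WtA p Nt) := by
  have hmem : ∀ M : Subgroup (WtA p Nt), IsCoatom M → ιW a ∈ M := by
    intro M hM
    -- M is normal since W is a finite p-group (hence nilpotent)
    haveI hMn : M.Normal := by
      have htfae := (isNilpotent_of_finite_tfae (G := WtA p Nt)).out 0 2
      haveI hnil : Group.IsNilpotent (WtA p Nt) := (WtA_pgroup (p := p) (Nt := Nt)).isNilpotent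
      exact htfae.mp hnil M hM
    -- the quotient is a nontrivial finite p-group, so it has nontrivial center
    haveI : Nontrivial (WtA p Nt ⧸ M) := by
      have hne : M ≠ ⊤ := hM.1
      have : ∃ x : WtA p Nt, x ∉ M := by
        by_contra hcon
        push_neg at hcon
        exact hne ((Subgroup.eq_top_iff' M).mpr hcon)
      obtain ⟨x, hx⟩ := this
      refine ⟨⟨QuotientGroup.mk x, 1, ?_⟩⟩
      rw [Ne, QuotientGroup.eq_one_iff]
      exact hx
    have hQp : IsPGroup p (WtA p Nt ⧸ M) := (WtA_pgroup (p := p) (Nt := Nt)).to_quotient M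
    have hcen := hQp.center_nontrivial
    -- pull the center back: it strictly contains M, hence equals ⊤ by coatomicity
    set Z' := (Subgroup.center (WtA p Nt ⧸ M)).comap (QuotientGroup.mk' M) with hZ'
    have hMZ : M ≤ Z' := by
      intro x hx
      have : (QuotientGroup.mk' M) x = 1 := (QuotientGroup.eq_one_iff x).mpr hx
      show (QuotientGroup.mk' M) x ∈ Subgroup.center _
      rw [this]; exact Subgroup.one_mem _
    have hMne : M ≠ Z' := by
      obtain ⟨z, hz⟩ := exists_ne (1 : Subgroup.center (WtA p Nt ⧸ M))
      obtain ⟨x, hx⟩ := QuotientGroup.mk_surjective (z : WtA p Nt ⧸ M)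
      intro hcon
      have hxZ : x ∈ Z' := by
        show (QuotientGroup.mk' M) x ∈ Subgroup.center _
        rw [QuotientGroup.mk'_apply, hx]
        exact z.2
      have hxM : x ∈ M := by rw [hcon]; exact hxZ
      have : (z : WtA p Nt ⧸ M) = 1 := by
        rw [← hx]
        exact (QuotientGroup.eq_one_iff x).mpr hxM
      exact hz (Subtype.ext this)
    have hZtop : Z' = ⊤ := hM.2 Z' (lt_of_le_of_ne hMZ hMne)
    -- hence the quotient is abelian, i.e. all commutators lie in M
    have hcomm : ∀ u v : WtA p Nt, (u * v) * (v * u)⁻¹ ∈ M := by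
      intro u v
      have huZ : u ∈ Z' := hZtop ▸ Subgroup.mem_top u
      have hu : (QuotientGroup.mk' M) u ∈ Subgroup.center _ := Subgroup.mem_comap.mp huZ
      have h3 : (QuotientGroup.mk' M) ((u * v) * (v * u)⁻¹) = 1 := by
        rw [map_mul, map_inv, map_mul, map_mul]
        have hc := Subgroup.mem_center_iff.mp hu ((QuotientGroup.mk' M) v)
        rw [← hc, mul_inv_cancel]
      have h4 : (u * v) * (v * u)⁻¹ ∈ (QuotientGroup.mk' M).ker := h3
      rwa [QuotientGroup.ker_mk'] at h4
    -- realize `ιW a` as such a commutator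
    have hval : ((1 : ZMod p)).val = 1 := ZMod.val_one p
    have hm1 : a ^ ((-1 : ZMod p)).val = a⁻¹ := by
      have h4 : a ^ ((-1 : ZMod p)).val * a ^ ((1 : ZMod p)).val = 1 := by
        rw [← aux_pow_val_add, neg_add_cancel, ZMod.val_zero, pow_zero]
      rw [hval, pow_one] at h4
      exact eq_inv_of_mul_eq_one_left h4
    have hkey : (⟨1, 1, (1 : ZMod p)⟩ * ⟨1, a, 0⟩ : WtA p Nt)
        * ((⟨1, a, 0⟩ : WtA p Nt) * ⟨1, 1, (1 : ZMod p)⟩)⁻¹ = ιW a := by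
      ext
      · simp [hval, hm1, mul_comm, mul_assoc, mul_left_comm]
      · simp
      · simp
    have := hcomm ⟨1, 1, (1 : ZMod p)⟩ ⟨1, a, 0⟩
    rwa [hkey] at this
  -- conclude: frattini is the infimum of the coatoms
  have : ∀ M ∈ {H : Subgroup (WtA p Nt) | IsCoatom H}, ιW a ∈ M := fun M hM => hmem M hM
  show ιW a ∈ Order.radical (Subgroup (WtA p Nt))
  rw [Order.radical]
  exact Subgroup.mem_iInf.mpr fun M => Subgroup.mem_iInf.mpr fun hM => hmem M hM

/-- Functorial action of automorphisms of `Nt` on `WtA p Nt`. -/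
def WtAutE (e : Nt ≃* Nt) : WtA p Nt ≃* WtA p Nt where
  toFun x := ⟨e x.a, e x.b, x.t⟩
  invFun x := ⟨e.symm x.a, e.symm x.b, x.t⟩
  left_inv x := by ext <;> simp
  right_inv x := by ext <;> simp
  map_mul' x y := by ext <;> simp [map_pow]

/-- The induced homomorphism `MulAut Nt →* MulAut (WtA p Nt)`. -/
def WtAutHom : MulAut Nt →* MulAut (WtA p Nt) where
  toFun := WtAutE
  map_one' := by
    apply MulEquiv.ext
    intro x
    ext <;> rfl
  map_mul' e f := by
    apply MulEquiv.ext
    intro x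
    ext <;> rfl

@[simp] theorem WtAutHom_apply_a (e : MulAut Nt) (x : WtA p Nt) :
    (WtAutHom e x).a = e x.a := rfl
@[simp] theorem WtAutHom_apply_b (e : MulAut Nt) (x : WtA p Nt) :
    (WtAutHom e x).b = e x.b := rfl
@[simp] theorem WtAutHom_apply_t (e : MulAut Nt) (x : WtA p Nt) :
    (WtAutHom e x).t = x.t := rfl

end AuxW


section AuxKeySat

/-- The key saturation step: if a finite group `Y` contains a normal copy of `WtA p Nt`
(via `j`) and admits a surjection `k` onto a group of `F` whose kernel consists of elements
of the central (Frattini) copy of `Nt`, then `Y ∈ F`. -/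
theorem aux_key_sat (p : ℕ) [hpp : Fact p.Prime] {Nt : Type} [CommGroup Nt] [Finite Nt]
    [Fact (∀ n : Nt, n ^ p = 1)] {F : GroupClass} (hF : IsFormation F)
    (hsat : NpSaturated p F) {Y : Type} [Group Y] [Finite Y] {Vq : Type} [Group Vq] [Finite Vq]
    (j : WtA p Nt →* Y) (hj : Function.Injective j) (hjn : j.range.Normal)
    (k : Y →* Vq) (hk : Function.Surjective k)
    (hker : ∀ y, k y = 1 → ∃ a : Nt, y = j (ιW a)) (hV : F Vq) : F Y := by
  haveI := hjn
  let e : WtA p Nt ≃* ↥j.range := MonoidHom.ofInjective hj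
  have hP : IsPGroup p ↥j.range := (WtA_pgroup (p := p) (Nt := Nt)).of_equiv e
  set M : Subgroup Y := (frattini ↥j.range).map j.range.subtype with hM
  haveI hMn : M.Normal := aux_frattini_map_normal j.range
  have hkerM : k.ker ≤ M := by
    intro y hy
    have hy1 : k y = 1 := hy
    obtain ⟨a, rfl⟩ := hker y hy1
    refine ⟨e (ιW a), aux_mem_frattini_equiv e (ιW_mem_frattini a), ?_⟩
    exact MonoidHom.ofInjective_apply hj
  have hYM : F (Y ⧸ M) := aux_quot_mem hF k hk hV M hkerM
  exact hsat Y j.range hP M hM hYM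

end AuxKeySat


private theorem sdp_ext {Nn Gg : Type} [Group Nn] [Group Gg] {φg : Gg →* MulAut Nn}
    {x y : Nn ⋊[φg] Gg} (h1 : x.left = y.left) (h2 : x.right = y.right) : x = y :=
  SemidirectProduct.ext h1 h2

/-- Let `𝔉` be an `ℕ_p`-saturated formation containing all finite `p`-groups and
`N` an elementary abelian normal `p`-subgroup of `G` with `G/N ∈ 𝔉` and
`N ⋊ (G/C_G(N)) ∈ 𝔉`.  Then `G ∈ 𝔉`. -/
theorem statement_3 (p : ℕ) (hp : p.Prime) (F : GroupClass) (hF : IsFormation F)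
    (hsat : NpSaturated p F)
    (hNp : ∀ (P : Type) [Group P] [Finite P], IsPGroup p P → F P)
    (G : Type) [Group G] [Finite G] (N : Subgroup G) [N.Normal]
    (hpgrp : IsPGroup p N)
    (hab : ∀ a b : N, a * b = b * a)
    (hord : ∀ x : N, x ≠ 1 → orderOf x = p)
    (hquot : F (G ⧸ N))
    (φ : G ⧸ Subgroup.centralizer (N : Set G) →* MulAut ↥N)
    (hφ : ∀ (g : G) (n : N), (↑(φ (QuotientGroup.mk g) n) : G) = g * ↑n * g⁻¹)
    (hsd : F (↥N ⋊[φ] (G ⧸ Subgroup.centralizer (N : Set G)))) :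
    F G := by
  classical
  haveI hpf : Fact p.Prime := ⟨hp⟩
  letI : CommGroup ↥N := { (inferInstance : Group ↥N) with mul_comm := hab }
  have hexp : ∀ n : ↥N, n ^ p = 1 := by
    intro n
    rcases eq_or_ne n 1 with rfl | hn
    · exact one_pow p
    · rw [← hord n hn]; exact pow_orderOf_eq_one n
  haveI : Fact (∀ n : ↥N, n ^ p = 1) := ⟨hexp⟩
  -- `N` is contained in its own centralizer
  have hNC : N ≤ Subgroup.centralizer (N : Set G) := by
    intro n hn
    rw [Subgroup.mem_centralizer_iff]
    intro m hm
    exact congrArg Subtype.val (hab ⟨m, hm⟩ ⟨n, hn⟩)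
  -- the induced action of `G/N` on `N`
  let θ : G ⧸ N →* G ⧸ Subgroup.centralizer (N : Set G) :=
    QuotientGroup.map N (Subgroup.centralizer (N : Set G)) (MonoidHom.id G) (fun x hx => hNC hx)
  have hθmk : ∀ g : G, θ (QuotientGroup.mk g) = QuotientGroup.mk g := fun g => rfl
  have hθs : Function.Surjective θ := by
    intro x
    obtain ⟨g, rfl⟩ := QuotientGroup.mk_surjective x
    exact ⟨QuotientGroup.mk g, hθmk g⟩
  let ψ : G ⧸ N →* MulAut ↥N := φ.comp θ
  have hψ_coe : ∀ (g : G) (m : ↥N), (↑(ψ (QuotientGroup.mk g) m) : G) = g * ↑m * g⁻¹ := by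
    intro g m
    show (↑(φ (θ (QuotientGroup.mk g)) m) : G) = _
    rw [hθmk]
    exact hφ g m
  have hFQ : F (G ⧸ N) := hquot
  -- Step 1 : the split extension S = N ⋊ (G/N) belongs to F
  let S := ↥N ⋊[ψ] (G ⧸ N)
  let fS : S →* ↥N ⋊[φ] (G ⧸ Subgroup.centralizer (N : Set G)) :=
    MonoidHom.mk' (fun x => ⟨x.left, θ x.right⟩) (by
      intro x y
      refine sdp_ext ?_ ?_
      · show (x * y).left = x.left * φ (θ x.right) y.left
        rw [SemidirectProduct.mul_left]; rfl
      · show θ (x * y).right = θ x.right * θ y.right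
        rw [SemidirectProduct.mul_right, map_mul])
  have hFS : F S := by
    refine aux_subdirect hF SemidirectProduct.rightHom fS
      SemidirectProduct.rightHom_surjective ?_ ?_ hFQ hsd
    · rintro ⟨n, c⟩
      obtain ⟨q, hq⟩ := hθs c
      refine ⟨⟨n, q⟩, ?_⟩
      show (⟨n, θ q⟩ : ↥N ⋊[φ] _) = ⟨n, c⟩
      rw [hq]
    · intro x h1 h2
      have hr : x.right = 1 := h1
      have hl : x.left = 1 := congrArg SemidirectProduct.left h2
      exact sdp_ext hl hr
  -- the cyclic group of order p
  have hCpP : IsPGroup p (Multiplicative (ZMod p)) := by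
    intro x
    refine ⟨1, ?_⟩
    rw [pow_one]
    have h2 : (x ^ p).toAdd = p • x.toAdd := toAdd_pow x p
    have h3 : p • x.toAdd = 0 := by rw [nsmul_eq_mul, ZMod.natCast_self, zero_mul]
    apply Multiplicative.toAdd.injective
    simpa using h2.trans h3
  have hFCp : F (Multiplicative (ZMod p)) := hNp _ hCpP
  have hFCpQ : F (Multiplicative (ZMod p) × (G ⧸ N)) := aux_prod_mem hF hFCp hFQ
  -- Step 2 : the split extension (N × C_p) ⋊ (G/N) belongs to F
  let χ : (G ⧸ N) →* MulAut (↥N × Multiplicative (ZMod p)) :=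
    MonoidHom.mk' (fun q => MulEquiv.prodCongr (ψ q) (MulEquiv.refl _)) (by
      intro q r
      apply MulEquiv.ext
      intro v
      have h1 : ψ (q * r) v.1 = ψ q (ψ r v.1) := by rw [map_mul]; rfl
      exact Prod.ext h1 rfl)
  let VQ := (↥N × Multiplicative (ZMod p)) ⋊[χ] (G ⧸ N)
  let gV1 : VQ →* Multiplicative (ZMod p) × (G ⧸ N) :=
    MonoidHom.mk' (fun x => (x.left.2, x.right)) (by
      intro x y
      have h1 : (x * y).left.2 = x.left.2 * y.left.2 := by
        rw [SemidirectProduct.mul_left]; rfl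
      have h2 : (x * y).right = x.right * y.right := SemidirectProduct.mul_right x y
      exact Prod.ext h1 h2)
  let gV2 : VQ →* S :=
    MonoidHom.mk' (fun x => ⟨x.left.1, x.right⟩) (by
      intro x y
      refine sdp_ext ?_ ?_
      · show (x * y).left.1 = x.left.1 * ψ x.right y.left.1
        rw [SemidirectProduct.mul_left]; rfl
      · exact SemidirectProduct.mul_right x y)
  have hFVQ : F VQ := by
    refine aux_subdirect hF gV1 gV2 ?_ ?_ ?_ hFCpQ hFS
    · rintro ⟨c, q⟩
      exact ⟨⟨(1, c), q⟩, rfl⟩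
    · rintro ⟨n, q⟩
      exact ⟨⟨(n, 1), q⟩, rfl⟩
    · intro x h1 h2
      have hr : x.right = 1 := congrArg Prod.snd h1
      have hl2 : x.left.2 = 1 := congrArg Prod.fst h1
      have hl1 : x.left.1 = 1 := congrArg SemidirectProduct.left h2
      refine sdp_ext ?_ hr
      show x.left = (1 : ↥N × Multiplicative (ZMod p))
      exact Prod.ext hl1 hl2
  -- Step 3 : W ⋊ (G/N) belongs to F, by Np-saturation
  let χW : (G ⧸ N) →* MulAut (WtA p ↥N) := (WtAutHom (p := p) (Nt := ↥N)).comp ψ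
  let X₀ := WtA p ↥N ⋊[χW] (G ⧸ N)
  let h₀ : X₀ →* VQ :=
    MonoidHom.mk' (fun x => ⟨prW x.left, x.right⟩) (by
      intro x y
      refine sdp_ext ?_ ?_
      · show prW (x * y).left = prW x.left * χ x.right (prW y.left)
        rw [SemidirectProduct.mul_left, map_mul]
        rfl
      · exact SemidirectProduct.mul_right x y)
  have hFX₀ : F X₀ := by
    refine aux_key_sat p hF hsat SemidirectProduct.inl SemidirectProduct.inl_injective ?_ h₀
      ?_ ?_ hFVQ
    · rw [SemidirectProduct.range_inl_eq_ker_rightHom]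
      infer_instance
    · rintro ⟨⟨nv, cv⟩, q⟩
      exact ⟨⟨⟨1, nv, cv.toAdd⟩, q⟩, rfl⟩
    · intro y hy
      have hr : y.right = 1 := congrArg SemidirectProduct.right hy
      have hb : y.left.b = 1 := congrArg (fun z : VQ => z.left.1) hy
      have ht : y.left.t = 0 := by
        have h5 := congrArg (fun z : VQ => (z.left.2).toAdd) hy
        exact h5
      refine ⟨y.left.a, ?_⟩
      refine sdp_ext ?_ hr
      show y.left = ιW y.left.a
      exact WtA.ext rfl hb ht
  -- Step 4 : the twisted group T = W ⋊ G and the diagonal subgroup D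
  let χG : G →* MulAut (WtA p ↥N) := χW.comp (QuotientGroup.mk' N)
  let T := WtA p ↥N ⋊[χG] G
  have hχGN : ∀ (g : G), g ∈ N → ∀ w : WtA p ↥N, χG g w = w := by
    intro g hg w
    have h1 : (QuotientGroup.mk' N) g = 1 := (QuotientGroup.eq_one_iff g).mpr hg
    show χW ((QuotientGroup.mk' N) g) w = w
    rw [h1, map_one]
    rfl
  have hχGmul : ∀ (a b : G) (w : WtA p ↥N), χG a (χG b w) = χG (a * b) w := by
    intro a b w
    rw [map_mul]
    rfl
  have hχG_ιW : ∀ (g : G) (m : ↥N), χG g (ιW m) = ιW (ψ (QuotientGroup.mk g) m) := by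
    intro g m
    refine WtA.ext rfl ?_ rfl
    show ψ (QuotientGroup.mk g) (1 : ↥N) = 1
    exact map_one _
  let d : ↥N →* T :=
    MonoidHom.mk' (fun n => ⟨ιW n⁻¹, (n : G)⟩) (by
      intro n m
      refine sdp_ext ?_ ?_
      · show ιW (n * m)⁻¹ = ιW n⁻¹ * χG (n : G) (ιW m⁻¹)
        rw [hχGN (n : G) n.2, ← map_mul, mul_inv]
      · show ((n * m : ↥N) : G) = (n : G) * (m : G)
        rfl)
  let D := d.range
  haveI hDN : D.Normal := by
    constructor
    rintro x ⟨n, rfl⟩ g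
    refine ⟨ψ (QuotientGroup.mk g.right) n, ?_⟩
    have hdl : (d n).left = ιW n⁻¹ := rfl
    have hdr : (d n).right = (n : G) := rfl
    have h8 : ψ (QuotientGroup.mk g.right) n⁻¹ = (ψ (QuotientGroup.mk g.right) n)⁻¹ :=
      map_inv _ _
    refine sdp_ext ?_ ?_
    · show ιW (ψ (QuotientGroup.mk g.right) n)⁻¹ = (g * d n * g⁻¹).left
      rw [SemidirectProduct.mul_left, SemidirectProduct.mul_left, SemidirectProduct.inv_left,
        SemidirectProduct.mul_right, hdl, hdr, hχGmul,
        hχGN ((g.right * (n : G)) * g.right⁻¹) (‹N.Normal›.conj_mem (n : G) n.2 g.right),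
        hχG_ιW, h8, ← ιW_comm, mul_assoc, mul_inv_cancel, mul_one]
    · show ((ψ (QuotientGroup.mk g.right) n : ↥N) : G) = (g * d n * g⁻¹).right
      rw [SemidirectProduct.mul_right, SemidirectProduct.mul_right,
        SemidirectProduct.inv_right, hdr]
      exact hψ_coe g.right n
  -- Step 5 : T/D belongs to F, again by Np-saturation
  let hbar : T →* VQ :=
    MonoidHom.mk' (fun x => ⟨prW x.left, (QuotientGroup.mk' N) x.right⟩) (by
      intro x y
      refine sdp_ext ?_ ?_
      · show prW (x * y).left = prW x.left * χ ((QuotientGroup.mk' N) x.right) (prW y.left)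
        rw [SemidirectProduct.mul_left, map_mul]
        rfl
      · show (QuotientGroup.mk' N) (x * y).right = _
        rw [SemidirectProduct.mul_right, map_mul]
        rfl)
  have hbarD : D ≤ hbar.ker := by
    rintro x ⟨n, rfl⟩
    show hbar (d n) = 1
    refine sdp_ext ?_ ?_
    · rfl
    · show (QuotientGroup.mk' N) ((n : ↥N) : G) = 1
      exact (QuotientGroup.eq_one_iff _).mpr n.2
  let X := T ⧸ D
  let h₁ : X →* VQ := QuotientGroup.lift D hbar hbarD
  let jX : WtA p ↥N →* X := (QuotientGroup.mk' D).comp SemidirectProduct.inl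
  have hjX_inj : Function.Injective jX := by
    intro w₁ w₂ h
    have h' : (QuotientGroup.mk' D) (SemidirectProduct.inl w₁)
        = (QuotientGroup.mk' D) (SemidirectProduct.inl w₂) := h
    rw [QuotientGroup.mk'_eq_mk'] at h'
    obtain ⟨z, hz, hzeq⟩ := h'
    obtain ⟨n, rfl⟩ := hz
    have hn : (n : G) = 1 := by
      have h6 := congrArg SemidirectProduct.right hzeq
      have h7 : (1 : G) * (n : G) = 1 := h6
      simpa using h7
    have hn1 : n = 1 := Subtype.ext hn
    rw [hn1, map_one, mul_one] at hzeq
    exact SemidirectProduct.inl_injective hzeq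
  have hjXr : jX.range.Normal := by
    have h1 : jX.range
        = Subgroup.map (QuotientGroup.mk' D) (SemidirectProduct.inl (φ := χG)).range :=
      MonoidHom.range_comp _ _
    rw [h1]
    have h2 : (SemidirectProduct.inl (φ := χG)).range.Normal := by
      rw [SemidirectProduct.range_inl_eq_ker_rightHom]
      infer_instance
    exact Subgroup.Normal.map h2 _ (QuotientGroup.mk'_surjective D)
  have hFX : F X := by
    refine aux_key_sat p hF hsat jX hjX_inj hjXr h₁ ?_ ?_ hFVQ
    · rintro ⟨⟨nv, cv⟩, q⟩
      obtain ⟨g, hg⟩ := QuotientGroup.mk'_surjective N q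
      refine ⟨(QuotientGroup.mk' D) ⟨⟨1, nv, cv.toAdd⟩, g⟩, ?_⟩
      show hbar ⟨⟨1, nv, cv.toAdd⟩, g⟩ = _
      refine sdp_ext ?_ ?_
      · rfl
      · exact hg
    · intro y hy
      obtain ⟨x, rfl⟩ := QuotientGroup.mk'_surjective D y
      have hy' : hbar x = 1 := hy
      have hb : x.left.b = 1 := congrArg (fun z : VQ => z.left.1) hy'
      have ht : x.left.t = 0 := by
        have h5 := congrArg (fun z : VQ => (z.left.2).toAdd) hy'
        exact h5
      have hrN : x.right ∈ N := by
        have h6 : (QuotientGroup.mk' N) x.right = 1 := congrArg SemidirectProduct.right hy'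
        exact (QuotientGroup.eq_one_iff _).mp h6
      refine ⟨x.left.a * ⟨x.right, hrN⟩, ?_⟩
      show (QuotientGroup.mk' D) x = (QuotientGroup.mk' D) (SemidirectProduct.inl _)
      rw [QuotientGroup.mk'_eq_mk']
      refine ⟨d (⟨x.right, hrN⟩ : ↥N)⁻¹, ⟨(⟨x.right, hrN⟩ : ↥N)⁻¹, rfl⟩, ?_⟩
      have hdl : (d (⟨x.right, hrN⟩ : ↥N)⁻¹).left = ιW ((⟨x.right, hrN⟩ : ↥N)⁻¹)⁻¹ := rfl
      have hdr : (d (⟨x.right, hrN⟩ : ↥N)⁻¹).right = ((⟨x.right, hrN⟩ : ↥N)⁻¹ : ↥N) := rfl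
      refine sdp_ext ?_ ?_
      · show (x * d (⟨x.right, hrN⟩ : ↥N)⁻¹).left = ιW (x.left.a * ⟨x.right, hrN⟩)
        rw [SemidirectProduct.mul_left, hdl, inv_inv, hχGN x.right hrN]
        have hxl : x.left = ιW x.left.a := WtA.ext rfl hb ht
        rw [map_mul]
        rw [← hxl]
      · show (x * d (⟨x.right, hrN⟩ : ↥N)⁻¹).right = 1
        rw [SemidirectProduct.mul_right, hdr, Subgroup.coe_inv]
        exact mul_inv_cancel x.right
  -- Step 6 : subdirect decomposition of T, giving T ∈ F and finally G ∈ F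
  let hhat : T →* X₀ :=
    MonoidHom.mk' (fun x => ⟨x.left, (QuotientGroup.mk' N) x.right⟩) (by
      intro x y
      refine sdp_ext ?_ ?_
      · show (x * y).left = x.left * χW ((QuotientGroup.mk' N) x.right) y.left
        rw [SemidirectProduct.mul_left]
        rfl
      · show (QuotientGroup.mk' N) (x * y).right = _
        rw [SemidirectProduct.mul_right, map_mul]
        rfl)
  have hFT : F T := by
    refine aux_subdirect hF hhat (QuotientGroup.mk' D) ?_ (QuotientGroup.mk'_surjective D)
      ?_ hFX₀ hFX
    · rintro ⟨w, q⟩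
      obtain ⟨g, hg⟩ := QuotientGroup.mk'_surjective N q
      refine ⟨⟨w, g⟩, ?_⟩
      show (⟨w, (QuotientGroup.mk' N) g⟩ : X₀) = ⟨w, q⟩
      rw [hg]
    · intro x h1 h2
      have hw : x.left = 1 := congrArg SemidirectProduct.left h1
      have hx : x ∈ D := by
        have h2' : (x : T ⧸ D) = 1 := h2
        exact (QuotientGroup.eq_one_iff x).mp h2'
      obtain ⟨n, rfl⟩ := hx
      have h7 : ιW (n⁻¹ : ↥N) = 1 := hw
      have hn : (n⁻¹ : ↥N) = 1 := ιW_injective (h7.trans (map_one _).symm)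
      rw [inv_eq_one] at hn
      rw [hn, map_one]
  exact aux_mem_of_surjective hF SemidirectProduct.rightHom
    SemidirectProduct.rightHom_surjective hFT
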